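/- Let n ≥ 2, 0 = x₁ < x₂ < ⋯ < xₙ = 1 and 0 = y₁ < y₂ < ⋯ < yₙ. Suppose for each j = 1,…,n-1 there is an increasing real Möbius map T_j with T_j(x_j) = y_j, T_j(x_{j+1}) = y_{j+1}, and T'_j(x_{j+1}) = T'_{j+1}(x_{j+1}) for j ≤ n-2 (continuous matching of derivatives), with T'_1(x₁) = 1. Then T'_{n-1}(xₙ) = 1 if and only if the alternating product (yₙ-y_{n-1})/(xₙ-x_{n-1}) · (x_{n-1}-x_{n-2})/(y_{n-1}-y_{n-2}) · (y_{n-2}-y_{n-3})/(x_{n-2}-x_{n-3}) ⋯ equals 1, where the last factor is (y₂-y₁)/(x₂-x₁) if n is even and (x₂-x₁)/(y₂-y₁) if n is odd. -/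

import Mathlib

open Finset

lemma mobius_deriv (p q r s a : ℝ) (ha : r * a + s ≠ 0) :
    deriv (fun z => (p * z + q) / (r * z + s)) a = (p * s - q * r) / (r * a + s) ^ 2 := by
  have h1 : HasDerivAt (fun z : ℝ => p * z + q) p a := by
    simpa using ((hasDerivAt_id a).const_mul p).add_const q
  have h2 : HasDerivAt (fun z : ℝ => r * z + s) r a := by
    simpa using ((hasDerivAt_id a).const_mul r).add_const s
  rw [show (fun z => (p * z + q) / (r * z + s)) = (fun z => p * z + q) / (fun z => r * z + s) from rfl, (h1.div h2 ha).deriv]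
  field_simp
  ring

/-- Propagating derivatives of increasing real Möbius maps through the chain of
points `0 = x₁ < ⋯ < xₙ = 1`, `0 = y₁ < ⋯ < yₙ`: if `T j` is an increasing real
Möbius map sending `x j, x (j+1)` to `y j, y (j+1)`, derivatives match at interior
points, and `T₁'(x₁) = 1`, then `T_{n-1}'(xₙ) = 1` if and only if the alternating
product `∏_{j=1}^{n-1} ((y_{j+1}-y_j)/(x_{j+1}-x_j))^{(-1)^{n-1-j}}` equals `1`. -/
theorem piecewise_mobius_derivative_product
    (n : ℕ) (hn : 2 ≤ n) (x y : ℕ → ℝ) (T : ℕ → ℝ → ℝ)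
    (hx1 : x 1 = 0) (hxn : x n = 1) (hy1 : y 1 = 0)
    (hxmono : ∀ j, 1 ≤ j → j < n → x j < x (j + 1))
    (hymono : ∀ j, 1 ≤ j → j < n → y j < y (j + 1))
    (hmob : ∀ j ∈ Finset.Icc 1 (n - 1), ∃ p q r s : ℝ,
      p * s - q * r > 0 ∧ r * x j + s ≠ 0 ∧ r * x (j + 1) + s ≠ 0 ∧
      T j = fun z => (p * z + q) / (r * z + s))
    (hval : ∀ j ∈ Finset.Icc 1 (n - 1), T j (x j) = y j ∧ T j (x (j + 1)) = y (j + 1))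
    (hmatch : ∀ j ∈ Finset.Icc 1 (n - 2),
      deriv (T j) (x (j + 1)) = deriv (T (j + 1)) (x (j + 1)))
    (hstart : deriv (T 1) (x 1) = 1) :
    deriv (T (n - 1)) (x n) = 1 ↔
      ∏ j ∈ Finset.Icc 1 (n - 1),
        ((y (j + 1) - y j) / (x (j + 1) - x j)) ^ ((-1 : ℤ) ^ (n - 1 - j)) = 1 := by
  set R : ℕ → ℝ := fun j => (y (j + 1) - y j) / (x (j + 1) - x j) with hR
  have hRpos : ∀ j, 1 ≤ j → j ≤ n - 1 → 0 < R j := by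
    intro j h1 h2
    have hj : j < n := by omega
    exact div_pos (by linarith [hymono j h1 hj]) (by linarith [hxmono j h1 hj])
  have key : ∀ j, 1 ≤ j → j ≤ n - 1 →
      0 < deriv (T j) (x j) ∧
      deriv (T j) (x j) * deriv (T j) (x (j + 1)) = (R j) ^ 2 := by
    intro j h1 h2
    have hmem : j ∈ Finset.Icc 1 (n - 1) := by simp [Finset.mem_Icc]; omega
    obtain ⟨p, q, c, d, hpd, hda, hdb, hT⟩ := hmob j hmem
    have hj : j < n := by omega
    have hxab := hxmono j h1 hj
    have hva := (hval j hmem).1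
    have hvb := (hval j hmem).2
    rw [hT] at hva hvb
    simp only at hva hvb
    rw [hT, mobius_deriv p q c d _ hda, mobius_deriv p q c d _ hdb]
    refine ⟨div_pos hpd (by positivity), ?_⟩
    have hrj : R j = (p * d - q * c) / ((c * x j + d) * (c * x (j + 1) + d)) := by
      rw [hR]
      simp only
      rw [← hva, ← hvb]
      have hne : x (j + 1) - x j ≠ 0 := sub_ne_zero.mpr (ne_of_gt hxab)
      rw [div_sub_div _ _ hdb hda, div_div, div_eq_div_iff (mul_ne_zero (mul_ne_zero hdb hda) hne) (mul_ne_zero hda hdb)]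
      ring
    rw [hrj]
    field_simp
  -- Q j : the alternating product up to j
  set Q : ℕ → ℝ := fun j => ∏ k ∈ Finset.Icc 1 j, (R k) ^ ((-1 : ℤ) ^ (j - k)) with hQ
  have hQpos : ∀ j, j ≤ n - 1 → 0 < Q j := by
    intro j hj
    apply Finset.prod_pos
    intro k hk
    simp only [Finset.mem_Icc] at hk
    exact zpow_pos (hRpos k hk.1 (by omega)) _
  have main : ∀ j, 1 ≤ j → j ≤ n - 1 → deriv (T j) (x (j + 1)) = (Q j) ^ 2 := by
    intro j h1
    induction j, h1 using Nat.le_induction with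
    | base =>
      intro h2
      have hk := key 1 le_rfl h2
      have hQ1 : Q 1 = R 1 := by simp [hQ]
      rw [hstart, one_mul] at hk
      rw [hk.2, hQ1]
    | succ j hj ih =>
      intro h2
      have hjn : j ≤ n - 1 := by omega
      have ihv := ih hjn
      have hk := key (j + 1) (by omega) h2
      have hm : deriv (T (j + 1)) (x (j + 1)) = (Q j) ^ 2 := by
        rw [← hmatch j (by simp [Finset.mem_Icc]; omega)]
        exact ihv
      have hQj := hQpos j hjn
      have hQstep : Q (j + 1) = R (j + 1) * (Q j)⁻¹ := by
        rw [hQ]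
        simp only
        rw [Finset.prod_Icc_succ_top (by omega)]
        rw [Nat.sub_self, pow_zero, zpow_one, mul_comm]
        congr 1
        rw [← Finset.prod_inv_distrib]
        apply Finset.prod_congr rfl
        intro k hk'
        simp only [Finset.mem_Icc] at hk'
        have : j + 1 - k = (j - k) + 1 := by omega
        rw [this, pow_succ, mul_neg_one, zpow_neg]
      have hDpos : 0 < deriv (T (j + 1)) (x (j + 1)) := (key (j + 1) (by omega) h2).1
      have hDne : deriv (T (j + 1)) (x (j + 1)) ≠ 0 := ne_of_gt hDpos
      have := hk.2
      rw [hm] at this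
      rw [hQstep]
      have hQne : (Q j) ≠ 0 := ne_of_gt hQj
      field_simp at this ⊢
      nlinarith [sq_nonneg (Q j)]
  have hfin : deriv (T (n - 1)) (x n) = (Q (n - 1)) ^ 2 := by
    have : n = (n - 1) + 1 := by omega
    rw [this]
    simpa using main (n - 1) (by omega) le_rfl
  rw [hfin]
  have hQn := hQpos (n - 1) le_rfl
  constructor
  · intro h
    have : Q (n - 1) = 1 := by nlinarith
    simpa [hQ] using this
  · intro h
    have : Q (n - 1) = 1 := by simpa [hQ] using h
    rw [this]; norm_num
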